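/- If C is an invertible n-by-n matrix, A is positive definite, and W = A C A C* A, then W is Hermitian positive definite. -/

import Mathlib

open scoped ComplexOrder Matrix

lemma posdef_conj_aux {n : ℕ} {A B : Matrix (Fin n) (Fin n) ℂ}
    (hA : A.PosDef) (hB : IsUnit B) : (B * A * Bᴴ).PosDef := by
  refine Matrix.PosDef.of_dotProduct_mulVec_pos (Matrix.isHermitian_mul_mul_conjTranspose _ hA.1) fun x hx => ?_
  have hx' : Bᴴ *ᵥ x ≠ 0 := by
    intro h
    apply hx
    have hBH : IsUnit Bᴴ := (Matrix.isUnit_conjTranspose B).mpr hB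
    have := congrArg (fun y => (Bᴴ)⁻¹ *ᵥ y) h
    simpa [Matrix.mulVec_mulVec, Matrix.nonsing_inv_mul _ ((Matrix.isUnit_iff_isUnit_det _).mp hBH)] using this
  have := hA.dotProduct_mulVec_pos hx'
  simpa [Matrix.mul_assoc, Matrix.mulVec_mulVec, Matrix.star_mulVec,
    Matrix.dotProduct_mulVec] using this

/-- The generalized symmetric word `A C A Cᴴ A` in a positive definite `A` and an
invertible `C` is Hermitian positive definite. -/
theorem stmt_18 {n : ℕ} (A C : Matrix (Fin n) (Fin n) ℂ)
    (hA : A.PosDef) (hC : IsUnit C) :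
    (A * C * A * Cᴴ * A).IsHermitian ∧ (A * C * A * Cᴴ * A).PosDef := by
  have h1 : (C * A * Cᴴ).PosDef := posdef_conj_aux hA hC
  have h2 : (A * (C * A * Cᴴ) * Aᴴ).PosDef := posdef_conj_aux h1 hA.isUnit
  have heq : A * (C * A * Cᴴ) * Aᴴ = A * C * A * Cᴴ * A := by
    rw [hA.isHermitian.eq]; noncomm_ring [Matrix.mul_assoc]
  rw [heq] at h2
  exact ⟨h2.1, h2⟩
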